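/- In the reluctance model with $g_c(\beta) = (\beta(q_F(\beta) - q_R(\beta)) + q_R(\beta))(\eta_c + \beta(1-\eta_c)) - \beta$, suppose $g_c(0) > 0$, $g_c(1) < 0$, and $g_c'$ is a convex function on $[0,1]$ that attains negative values. Then the set $D = \{\beta \in [0,1] : g_c'(\beta) \le 0\}$ is a closed interval $[\tilde{\beta}_1, \tilde{\beta}_2]$, $g_c$ has a unique zero $\beta^*$, and $\beta^* \in D$; moreover $g_c > 0$ on $[0, \beta^*)$ and $g_c < 0$ on $(\beta^*, 1]$. -/

import Mathlib

/-- If `f` is convex on `s`, `f u < 0`, `f v ≤ 0`, then `f x < 0` for `x` strictly between. -/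
lemma convexOn_neg_between {f : ℝ → ℝ} {s : Set ℝ} (hf : ConvexOn ℝ s f)
    {u x v : ℝ} (hu : u ∈ s) (hv : v ∈ s) (hux : u < x) (hxv : x < v)
    (hfu : f u < 0) (hfv : f v ≤ 0) : f x < 0 := by
  have huv : (0:ℝ) < v - u := by linarith
  set a : ℝ := (v - x) / (v - u) with ha
  set b : ℝ := (x - u) / (v - u) with hb
  have hapos : 0 < a := div_pos (by linarith) huv
  have hbpos : 0 < b := div_pos (by linarith) huv
  have hab : a + b = 1 := by rw [ha, hb]; field_simp; ring
  have hx : a • u + b • v = x := by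
    rw [smul_eq_mul, smul_eq_mul, ha, hb]
    field_simp
    ring
  have := hf.2 hu hv hapos.le hbpos.le hab
  rw [hx] at this
  have h1 : a * f u < 0 := mul_neg_of_pos_of_neg hapos hfu
  have h2 : b * f v ≤ 0 := mul_nonpos_of_nonneg_of_nonpos hbpos.le hfv
  simp only [smul_eq_mul] at this
  linarith

lemma convexOn_neg_between' {f : ℝ → ℝ} {s : Set ℝ} (hf : ConvexOn ℝ s f)
    {u x v : ℝ} (hu : u ∈ s) (hv : v ∈ s) (hux : u < x) (hxv : x < v)
    (hfu : f u ≤ 0) (hfv : f v < 0) : f x < 0 := by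
  have huv : (0:ℝ) < v - u := by linarith
  set a : ℝ := (v - x) / (v - u) with ha
  set b : ℝ := (x - u) / (v - u) with hb
  have hapos : 0 < a := div_pos (by linarith) huv
  have hbpos : 0 < b := div_pos (by linarith) huv
  have hab : a + b = 1 := by rw [ha, hb]; field_simp; ring
  have hx : a • u + b • v = x := by
    rw [smul_eq_mul, smul_eq_mul, ha, hb]
    field_simp
    ring
  have := hf.2 hu hv hapos.le hbpos.le hab
  rw [hx] at this
  have h1 : a * f u ≤ 0 := mul_nonpos_of_nonneg_of_nonpos hapos.le hfu
  have h2 : b * f v < 0 := mul_neg_of_pos_of_neg hbpos hfv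
  simp only [smul_eq_mul] at this
  linarith

theorem stmt_18 (gc : ℝ → ℝ) (hgc : ContDiff ℝ 1 gc)
    (hconv : ConvexOn ℝ (Set.Icc (0:ℝ) 1) (deriv gc))
    (hneg : ∃ β ∈ Set.Icc (0:ℝ) 1, deriv gc β < 0)
    (h0 : 0 < gc 0) (h1 : gc 1 < 0) :
    (∃ b1 b2 : ℝ, b1 ∈ Set.Icc (0:ℝ) 1 ∧ b2 ∈ Set.Icc (0:ℝ) 1 ∧ b1 ≤ b2
      ∧ {β : ℝ | β ∈ Set.Icc (0:ℝ) 1 ∧ deriv gc β ≤ 0} = Set.Icc b1 b2)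
    ∧ ∃ βs ∈ Set.Ioo (0:ℝ) 1, gc βs = 0 ∧ deriv gc βs ≤ 0
      ∧ (∀ β ∈ Set.Icc (0:ℝ) 1, β < βs → 0 < gc β)
      ∧ (∀ β ∈ Set.Icc (0:ℝ) 1, βs < β → gc β < 0)
      ∧ (∀ β' ∈ Set.Icc (0:ℝ) 1, gc β' = 0 → β' = βs) := by
  obtain ⟨β0, hβ0mem, hβ0neg⟩ := hneg
  have hcontd : Continuous (deriv gc) := hgc.continuous_deriv le_rfl
  have hcont : Continuous gc := hgc.continuous
  set D : Set ℝ := {β : ℝ | β ∈ Set.Icc (0:ℝ) 1 ∧ deriv gc β ≤ 0} with hD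
  have hDconv : Convex ℝ D := hconv.convex_le 0
  have hDclosed : IsClosed D := by
    have h2 : IsClosed (Set.Icc (0:ℝ) 1 ∩ (deriv gc) ⁻¹' Set.Iic 0) :=
      isClosed_Icc.inter (isClosed_Iic.preimage hcontd)
    exact h2
  have hDsub : D ⊆ Set.Icc (0:ℝ) 1 := fun x hx => hx.1
  have hDne : D.Nonempty := ⟨β0, hβ0mem, hβ0neg.le⟩
  have hDcompact : IsCompact D := IsCompact.of_isClosed_subset isCompact_Icc hDclosed hDsub
  have hDeq : D = Set.Icc (sInf D) (sSup D) :=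
    eq_Icc_of_connected_compact ⟨hDne, hDconv.isPreconnected⟩ hDcompact
  set b1 := sInf D with hb1
  set b2 := sSup D with hb2
  have hβ0D : β0 ∈ D := ⟨hβ0mem, hβ0neg.le⟩
  have hβ0Icc : β0 ∈ Set.Icc b1 b2 := hDeq ▸ hβ0D
  have hb1le2 : b1 ≤ b2 := le_trans hβ0Icc.1 hβ0Icc.2
  have hb1mem : b1 ∈ D := by rw [hDeq]; exact ⟨le_refl _, hb1le2⟩
  have hb2mem : b2 ∈ D := by rw [hDeq]; exact ⟨hb1le2, le_refl _⟩
  have hb1Icc : b1 ∈ Set.Icc (0:ℝ) 1 := hDsub hb1mem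
  have hb2Icc : b2 ∈ Set.Icc (0:ℝ) 1 := hDsub hb2mem
  -- deriv gc > 0 on [0,1] \ [b1,b2]
  have hpos_out : ∀ x ∈ Set.Icc (0:ℝ) 1, x ∉ Set.Icc b1 b2 → 0 < deriv gc x := by
    intro x hx hnx
    by_contra h
    exact hnx (hDeq ▸ (⟨hx, not_lt.mp h⟩ : x ∈ D))
  -- deriv gc < 0 on (b1, b2)
  have hneg_in : ∀ x ∈ Set.Ioo b1 b2, deriv gc x < 0 := by
    intro x hx
    rcases lt_trichotomy β0 x with hlt | heq | hgt
    · exact convexOn_neg_between hconv hβ0mem hb2Icc hlt hx.2 hβ0neg hb2mem.2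
    · rw [← heq]; exact hβ0neg
    · exact convexOn_neg_between' hconv hb1Icc hβ0mem hx.1 hgt hb1mem.2 hβ0neg
  -- gc strictly increasing on [0, b1]
  have hmono1 : StrictMonoOn gc (Set.Icc (0:ℝ) b1) := by
    apply strictMonoOn_of_deriv_pos (convex_Icc _ _) hcont.continuousOn
    intro x hx
    rw [interior_Icc] at hx
    exact hpos_out x ⟨hx.1.le, hx.2.le.trans hb1Icc.2⟩
      (fun hm => absurd hm.1 (not_le.mpr hx.2))
  -- gc strictly increasing on [b2, 1]
  have hmono2 : StrictMonoOn gc (Set.Icc b2 1) := by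
    apply strictMonoOn_of_deriv_pos (convex_Icc _ _) hcont.continuousOn
    intro x hx
    rw [interior_Icc] at hx
    exact hpos_out x ⟨hb2Icc.1.trans hx.1.le, hx.2.le⟩
      (fun hm => absurd hm.2 (not_le.mpr hx.1))
  -- gc strictly decreasing on [b1, b2]
  have hanti : StrictAntiOn gc (Set.Icc b1 b2) := by
    apply strictAntiOn_of_deriv_neg (convex_Icc _ _) hcont.continuousOn
    intro x hx
    rw [interior_Icc] at hx
    exact hneg_in x hx
  -- gc > 0 on [0, b1]
  have hApos : ∀ β, 0 ≤ β → β ≤ b1 → 0 < gc β := by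
    intro β h0β hβb1
    rcases eq_or_lt_of_le h0β with h | h
    · rw [← h]; exact h0
    · exact lt_trans h0 (hmono1 ⟨le_refl _, hb1Icc.1⟩ ⟨h0β, hβb1⟩ h)
  -- gc < 0 on [b2, 1]
  have hBneg : ∀ β, b2 ≤ β → β ≤ 1 → gc β < 0 := by
    intro β hb2β hβ1
    rcases eq_or_lt_of_le hβ1 with h | h
    · rw [h]; exact h1
    · exact lt_trans (hmono2 ⟨hb2β, hβ1⟩ ⟨hb2Icc.2, le_refl _⟩ h) h1
  -- existence of a zero
  have hzero : ∃ βs ∈ Set.Ioo (0:ℝ) 1, gc βs = 0 := by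
    have : (0:ℝ) ∈ Set.Ioo (gc 1) (gc 0) := ⟨h1, h0⟩
    obtain ⟨βs, hmem, heq⟩ :=
      intermediate_value_Ioo' (by norm_num : (0:ℝ) ≤ 1) hcont.continuousOn this
    exact ⟨βs, hmem, heq⟩
  obtain ⟨βs, hβsIoo, hβs0⟩ := hzero
  have hβs_gt : b1 < βs := by
    by_contra h
    exact absurd hβs0 (ne_of_gt (hApos βs hβsIoo.1.le (not_lt.mp h)))
  have hβs_lt : βs < b2 := by
    by_contra h
    exact absurd hβs0 (ne_of_lt (hBneg βs (not_lt.mp h) hβsIoo.2.le))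
  have hβsD : deriv gc βs ≤ 0 := (hneg_in βs ⟨hβs_gt, hβs_lt⟩).le
  -- sign claims
  have hposL : ∀ β ∈ Set.Icc (0:ℝ) 1, β < βs → 0 < gc β := by
    intro β hβ hlt
    rcases le_or_gt β b1 with h | h
    · exact hApos β hβ.1 h
    · calc 0 = gc βs := hβs0.symm
        _ < gc β := hanti ⟨h.le, hlt.le.trans hβs_lt.le⟩ ⟨hβs_gt.le, hβs_lt.le⟩ hlt
  have hnegR : ∀ β ∈ Set.Icc (0:ℝ) 1, βs < β → gc β < 0 := by
    intro β hβ hlt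
    rcases le_or_gt β b2 with h | h
    · calc gc β < gc βs := hanti ⟨hβs_gt.le, hβs_lt.le⟩ ⟨hβs_gt.le.trans hlt.le, h⟩ hlt
        _ = 0 := hβs0
    · exact hBneg β h.le hβ.2
  refine ⟨⟨b1, b2, hb1Icc, hb2Icc, hb1le2, hDeq⟩, βs, hβsIoo, hβs0, hβsD, hposL, hnegR, ?_⟩
  intro β' hβ' hzero'
  rcases lt_trichotomy β' βs with h | h | h
  · exact absurd hzero' (ne_of_gt (hposL β' hβ' h))
  · exact h
  · exact absurd hzero' (ne_of_lt (hnegR β' hβ' h))
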